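/- Let n and m₀ be integers with 0 < m₀ < n, and let h be an integer with 0 ≤ h ≤ m₀ − 1. Then, in the polynomial ring ℤ[x₁,…,xₙ], (h+1)·e_{n−m₀−1}(x₁,…,xₙ) = Σ_{a=m₀−h}^{n−1} Σ_{j=1}^{n−a} e_{h−m₀+a}(x_{j+1},…,x_{j+a−1}) · e_{n−h−1−a}(x_{j+a+1},…,xₙ,x₁,…,x_{j−1}), where the first factor is the elementary symmetric polynomial of degree h−m₀+a in the a−1 variables x_{j+1},…,x_{j+a−1}, and the second factor is the elementary symmetric polynomial of degree n−h−1−a in the n−a−1 variables x_{j+a+1},…,xₙ,x₁,…,x_{j−1}. -/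

import Mathlib

/-- The elementary symmetric polynomial of degree `d` in the (finite) list of
variables `l`, with the convention that it is `1` for `d = 0` and `0` when `d` is
negative or exceeds the number of variables. -/
noncomputable def esymList (l : List (MvPolynomial ℕ ℤ)) (d : ℤ) : MvPolynomial ℕ ℤ :=
  if d < 0 then 0 else ((l.sublistsLen d.toNat).map List.prod).sum

/-- The list of variables `x_a, x_{a+1}, …, x_{a+b-1}`. -/
noncomputable def xs (a b : ℕ) : List (MvPolynomial ℕ ℤ) :=
  (List.range' a b).map MvPolynomial.X

namespace Lemma52Aux

open Finset MvPolynomial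

lemma toFinset_range' (a b : ℕ) : (List.range' a b).toFinset = Finset.Ico a (a+b) := by
  ext x; simp [List.mem_range'_1]

lemma esymList_map (l : List ℕ) (hl : l.Nodup) (k : ℕ) :
    esymList (l.map MvPolynomial.X) (k : ℤ)
      = ∑ S ∈ Finset.powersetCard k l.toFinset, ∏ i ∈ S, (MvPolynomial.X i : MvPolynomial ℕ ℤ) := by
  rw [← Finset.esymm_map_val]
  have h1 : l.toFinset.val = (l : Multiset ℕ) := by
    rw [List.toFinset_val, List.dedup_eq_self.2 hl]
  rw [h1]
  have h2 : Multiset.map (fun i => (X i : MvPolynomial ℕ ℤ)) (↑l)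
      = ((l.map X : List (MvPolynomial ℕ ℤ)) : Multiset (MvPolynomial ℕ ℤ)) := by
    simp [Multiset.map_coe]
  rw [h2, Multiset.esymm, Multiset.powersetCard_coe]
  simp [esymList, Multiset.map_coe, Function.comp_def]

lemma card_between (G : Finset ℕ) {N : ℕ} (hN : G.card = N) (i i' : Fin N) (_hii : i < i') :
    (G ∩ Finset.Ioo ((G.orderIsoOfFin hN i : ℕ)) ((G.orderIsoOfFin hN i' : ℕ))).card
      = (i' : ℕ) - i - 1 := by
  set e := G.orderIsoOfFin hN with he
  have hinj : Function.Injective (fun m : Fin N => ((e m : G) : ℕ)) :=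
    fun a b hab => e.injective (Subtype.coe_injective hab)
  have himg : G ∩ Finset.Ioo ((e i : ℕ)) ((e i' : ℕ))
      = (Finset.Ioo i i').image (fun m => (e m : ℕ)) := by
    ext x
    simp only [Finset.mem_inter, Finset.mem_Ioo, Finset.mem_image]
    constructor
    · rintro ⟨hxG, h1, h2⟩
      refine ⟨e.symm ⟨x, hxG⟩, ⟨?_, ?_⟩, by simp⟩
      · rw [← e.lt_iff_lt, e.apply_symm_apply]
        exact h1
      · rw [← e.lt_iff_lt, e.apply_symm_apply]
        exact h2
    · rintro ⟨m, ⟨hm1, hm2⟩, rfl⟩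
      exact ⟨(e m).2, e.lt_iff_lt.2 hm1, e.lt_iff_lt.2 hm2⟩
  rw [himg, Finset.card_image_of_injective _ hinj, Fin.card_Ioo]

lemma count_pairs (G : Finset ℕ) (k : ℕ) (_hk : k + 1 ≤ G.card) :
    (((G ×ˢ G).filter (fun p => p.1 < p.2 ∧ (G ∩ Finset.Ioo p.1 p.2).card = k)).card)
      = G.card - (k + 1) := by
  classical
  set N := G.card with hN
  set e := G.orderIsoOfFin (rfl : G.card = N) with he
  rw [show N - (k+1) = (Finset.Ico (k+1) N).card by rw [Nat.card_Ico]]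
  refine Finset.card_bij (fun p hp => ((e.symm ⟨p.2, by
    simp only [Finset.mem_filter, Finset.mem_product] at hp; exact hp.1.2⟩ : Fin N) : ℕ)) ?_ ?_ ?_
  · rintro ⟨g, g'⟩ hp
    simp only [Finset.mem_filter, Finset.mem_product] at hp
    obtain ⟨⟨hg, hg'⟩, hlt, hcard⟩ := hp
    set i := e.symm ⟨g, hg⟩ with hi
    set i' := e.symm ⟨g', hg'⟩ with hi'
    have hii : i < i' := by
      rw [hi, hi', ← e.lt_iff_lt, e.apply_symm_apply, e.apply_symm_apply]
      exact hlt
    have hcb := card_between G rfl i i' hii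
    rw [hi, hi'] at hcb
    rw [e.apply_symm_apply, e.apply_symm_apply] at hcb
    rw [hcard] at hcb
    simp only [Finset.mem_Ico]
    have := i'.2
    constructor
    · omega
    · exact i'.2
  · rintro ⟨g, g'⟩ hp ⟨f, f'⟩ hq heq
    simp only [Finset.mem_filter, Finset.mem_product] at hp hq
    obtain ⟨⟨hg, hg'⟩, hlt, hcard⟩ := hp
    obtain ⟨⟨hf, hf'⟩, hlt', hcard'⟩ := hq
    simp only at heq
    have heq' : (e.symm ⟨g', hg'⟩) = (e.symm ⟨f', hf'⟩) := Fin.ext heq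
    have h2 : g' = f' := by
      have := congrArg (fun x => ((e x : G) : ℕ)) heq'
      simpa [e.apply_symm_apply] using this
    subst h2
    have key : ∀ (x y : ℕ) (hx : x ∈ G) (hy : y ∈ G), x < g' → y < g' →
        (G ∩ Finset.Ioo x g').card = k → (G ∩ Finset.Ioo y g').card = k → x = y := by
      intro x y hx hy hxg hyg hcx hcy
      set ix := e.symm ⟨x, hx⟩
      set iy := e.symm ⟨y, hy⟩
      set ig := e.symm ⟨g', hg'⟩
      have h1 : ix < ig := by rw [← e.lt_iff_lt, e.apply_symm_apply, e.apply_symm_apply]; exact hxg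
      have h2 : iy < ig := by rw [← e.lt_iff_lt, e.apply_symm_apply, e.apply_symm_apply]; exact hyg
      have c1 := card_between G rfl ix ig h1
      have c2 := card_between G rfl iy ig h2
      rw [e.apply_symm_apply, e.apply_symm_apply] at c1 c2
      rw [hcx] at c1; rw [hcy] at c2
      have hxy : ix = iy := by
        have h3 : (ix : ℕ) < ig := h1
        have h4 : (iy : ℕ) < ig := h2
        have : (ix : ℕ) = iy := by omega
        exact Fin.ext this
      have := congrArg (fun z => ((e z : G) : ℕ)) hxy
      simpa [ix, iy, e.apply_symm_apply] using this
    have := key g f hg hf hlt hlt' hcard hcard'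
    simp [this]
  · intro v hv
    simp only [Finset.mem_Ico] at hv
    set i' : Fin N := ⟨v, hv.2⟩ with hi'
    set i : Fin N := ⟨v - (k+1), by omega⟩ with hi
    have hii : i < i' := by
      simp only [Fin.lt_def, hi, hi']; omega
    refine ⟨(((e i : G) : ℕ), ((e i' : G) : ℕ)), ?_, ?_⟩
    · simp only [Finset.mem_filter, Finset.mem_product]
      refine ⟨⟨(e i).2, (e i').2⟩, ?_, ?_⟩
      · exact Subtype.coe_lt_coe.2 (e.lt_iff_lt.2 hii)
      · rw [card_between G rfl i i' hii]
        simp only [hi, hi']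
        omega
    · simp only
      rw [show (⟨((e i' : G) : ℕ), (e i').2⟩ : {x // x ∈ G}) = e i' from rfl, e.symm_apply_apply]

lemma term_eq (n m₀ h a j : ℕ) (hmn : m₀ < n) (hh : h + 1 ≤ m₀)
    (ha1 : m₀ - h ≤ a) (_ha2 : a ≤ n - 1) (hj1 : 1 ≤ j) (hj2 : j + a ≤ n) :
    esymList (xs (j + 1) (a - 1)) ((h : ℤ) - (m₀ : ℤ) + (a : ℤ)) *
      esymList (xs (j + a + 1) (n - (j + a)) ++ xs 1 (j - 1))
        ((n : ℤ) - (h : ℤ) - 1 - (a : ℤ))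
    = ∑ S ∈ (Finset.powersetCard (n - m₀ - 1) (Finset.Icc 1 n)).filter
        (fun S => j ∉ S ∧ j + a ∉ S ∧ (S ∩ Finset.Ioo j (j+a)).card + m₀ = h + a),
        ∏ i ∈ S, (X i : MvPolynomial ℕ ℤ) := by
  classical
  by_cases hcase : h + 1 + a ≤ n
  · set I := Finset.Ioo j (j+a) with hI
    set O := Finset.Ico (j+a+1) (n+1) ∪ Finset.Ico 1 j with hO
    have hmemI : ∀ x, x ∈ I ↔ (j < x ∧ x < j + a) := by intro x; simp [hI]
    have hmemO : ∀ x, x ∈ O ↔ ((j+a+1 ≤ x ∧ x ≤ n) ∨ (1 ≤ x ∧ x < j)) := by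
      intro x; simp [hO, Finset.mem_union, Nat.lt_succ_iff]
    set k₁ := h + a - m₀ with hk₁
    set k₂ := n - (h + 1 + a) with hk₂
    have e1 : esymList (xs (j + 1) (a - 1)) ((h : ℤ) - (m₀ : ℤ) + (a : ℤ))
        = ∑ T ∈ Finset.powersetCard k₁ I, ∏ i ∈ T, (X i : MvPolynomial ℕ ℤ) := by
      have hc : ((h : ℤ) - (m₀ : ℤ) + (a : ℤ)) = ((k₁ : ℕ) : ℤ) := by omega
      rw [hc, xs, esymList_map _ (List.nodup_range'), toFinset_range']
      congr 1
      rw [hI, show j+1+(a-1) = j + a by omega, Finset.Ico_add_one_left_eq_Ioo]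
    have e2 : esymList (xs (j + a + 1) (n - (j + a)) ++ xs 1 (j - 1))
        ((n : ℤ) - (h : ℤ) - 1 - (a : ℤ))
        = ∑ U ∈ Finset.powersetCard k₂ O, ∏ i ∈ U, (X i : MvPolynomial ℕ ℤ) := by
      have hc : ((n : ℤ) - (h : ℤ) - 1 - (a : ℤ)) = ((k₂ : ℕ) : ℤ) := by omega
      have hl : (List.range' (j+a+1) (n-(j+a)) ++ List.range' 1 (j-1)).Nodup := by
        refine List.Nodup.append (List.nodup_range') (List.nodup_range') ?_
        intro x hx1 hx2
        rw [List.mem_range'_1] at hx1 hx2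
        omega
      have hxs : xs (j + a + 1) (n - (j + a)) ++ xs 1 (j - 1)
          = (List.range' (j+a+1) (n-(j+a)) ++ List.range' 1 (j-1)).map X := by
        simp [xs, List.map_append]
      rw [hc, hxs, esymList_map _ hl]
      congr 1
      rw [List.toFinset_append, toFinset_range', toFinset_range', hO,
        show j+a+1+(n-(j+a)) = n+1 by omega, show 1+(j-1) = j by omega]
    rw [e1, e2, Finset.sum_mul_sum, ← Finset.sum_product']
    have hdisIO : Disjoint I O := by
      rw [Finset.disjoint_left]
      intro x hx hx'
      rw [hmemI] at hx; rw [hmemO] at hx'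
      omega
    refine Finset.sum_nbij' (i := fun p => p.1 ∪ p.2) (j := fun S => (S ∩ I, S ∩ O))
      ?_ ?_ ?_ ?_ ?_
    · rintro ⟨T, U⟩ hp
      simp only [Finset.mem_product, Finset.mem_powersetCard] at hp
      obtain ⟨⟨hTI, hTc⟩, hUO, hUc⟩ := hp
      have hdisTU : Disjoint T U := hdisIO.mono hTI hUO
      simp only [Finset.mem_filter, Finset.mem_powersetCard]
      have hTUI : (T ∪ U) ∩ I = T := by
        ext x
        simp only [Finset.mem_inter, Finset.mem_union]
        constructor
        · rintro ⟨hx1 | hx1, hx2⟩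
          · exact hx1
          · exact absurd hx2 (Finset.disjoint_right.1 hdisIO (hUO hx1))
        · intro hx; exact ⟨Or.inl hx, hTI hx⟩
      refine ⟨⟨?_, ?_⟩, ?_, ?_, ?_⟩
      · intro x hx
        rcases Finset.mem_union.1 hx with hx | hx
        · have := (hmemI x).1 (hTI hx); simp only [Finset.mem_Icc]; omega
        · have := (hmemO x).1 (hUO hx); simp only [Finset.mem_Icc]; omega
      · rw [Finset.card_union_of_disjoint hdisTU, hTc, hUc]; omega
      · intro hmem
        rcases Finset.mem_union.1 hmem with hx | hx
        · have := (hmemI j).1 (hTI hx); omega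
        · have := (hmemO j).1 (hUO hx); omega
      · intro hmem
        rcases Finset.mem_union.1 hmem with hx | hx
        · have := (hmemI (j+a)).1 (hTI hx); omega
        · have := (hmemO (j+a)).1 (hUO hx); omega
      · rw [hTUI, hTc]; omega
    · intro S hS
      simp only [Finset.mem_filter, Finset.mem_powersetCard] at hS
      obtain ⟨⟨hSsub, hSc⟩, hj, hja, hcard⟩ := hS
      have hcover : S = (S ∩ I) ∪ (S ∩ O) := by
        ext x
        simp only [Finset.mem_union, Finset.mem_inter]
        constructor
        · intro hx
          have hx' := Finset.mem_Icc.1 (hSsub hx)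
          have hxj : x ≠ j := fun e => hj (e ▸ hx)
          have hxja : x ≠ j + a := fun e => hja (e ▸ hx)
          by_cases hc : j < x ∧ x < j + a
          · exact Or.inl ⟨hx, (hmemI x).2 hc⟩
          · refine Or.inr ⟨hx, (hmemO x).2 ?_⟩
            omega
        · rintro (⟨hx, _⟩ | ⟨hx, _⟩) <;> exact hx
      have hdis : Disjoint (S ∩ I) (S ∩ O) :=
        hdisIO.mono Finset.inter_subset_right Finset.inter_subset_right
      have hcards : (S ∩ I).card + (S ∩ O).card = n - m₀ - 1 := by
        rw [← Finset.card_union_of_disjoint hdis, ← hcover, hSc]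
      simp only [Finset.mem_product, Finset.mem_powersetCard]
      exact ⟨⟨Finset.inter_subset_right, by omega⟩, Finset.inter_subset_right, by omega⟩
    · rintro ⟨T, U⟩ hp
      simp only [Finset.mem_product, Finset.mem_powersetCard] at hp
      obtain ⟨⟨hTI, hTc⟩, hUO, hUc⟩ := hp
      have h1 : (T ∪ U) ∩ I = T := by
        ext x
        simp only [Finset.mem_inter, Finset.mem_union]
        constructor
        · rintro ⟨hx1 | hx1, hx2⟩
          · exact hx1
          · exact absurd hx2 (Finset.disjoint_right.1 hdisIO (hUO hx1))
        · intro hx; exact ⟨Or.inl hx, hTI hx⟩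
      have h2 : (T ∪ U) ∩ O = U := by
        ext x
        simp only [Finset.mem_inter, Finset.mem_union]
        constructor
        · rintro ⟨hx1 | hx1, hx2⟩
          · exact absurd hx2 (Finset.disjoint_left.1 hdisIO (hTI hx1))
          · exact hx1
        · intro hx; exact ⟨Or.inr hx, hUO hx⟩
      simp [h1, h2]
    · intro S hS
      simp only [Finset.mem_filter, Finset.mem_powersetCard] at hS
      obtain ⟨⟨hSsub, hSc⟩, hj, hja, hcard⟩ := hS
      simp only
      ext x
      simp only [Finset.mem_union, Finset.mem_inter]
      constructor
      · rintro (⟨hx, _⟩ | ⟨hx, _⟩) <;> exact hx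
      · intro hx
        have hx' := Finset.mem_Icc.1 (hSsub hx)
        have hxj : x ≠ j := fun e => hj (e ▸ hx)
        have hxja : x ≠ j + a := fun e => hja (e ▸ hx)
        by_cases hc : j < x ∧ x < j + a
        · exact Or.inl ⟨hx, (hmemI x).2 hc⟩
        · refine Or.inr ⟨hx, (hmemO x).2 ?_⟩
          omega
    · rintro ⟨T, U⟩ hp
      simp only [Finset.mem_product, Finset.mem_powersetCard] at hp
      obtain ⟨⟨hTI, hTc⟩, hUO, hUc⟩ := hp
      have hdisTU : Disjoint T U := hdisIO.mono hTI hUO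
      exact (Finset.prod_union hdisTU).symm
  · have hneg : ((n : ℤ) - (h : ℤ) - 1 - (a : ℤ)) < 0 := by omega
    have h0 : esymList (xs (j + a + 1) (n - (j + a)) ++ xs 1 (j - 1))
        ((n : ℤ) - (h : ℤ) - 1 - (a : ℤ)) = 0 := if_pos hneg
    rw [h0, mul_zero]
    have hemp : (Finset.powersetCard (n - m₀ - 1) (Finset.Icc 1 n)).filter
        (fun S => j ∉ S ∧ j + a ∉ S ∧ (S ∩ Finset.Ioo j (j+a)).card + m₀ = h + a) = ∅ := by
      rw [Finset.filter_eq_empty_iff]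
      intro S hS
      rw [Finset.mem_powersetCard] at hS
      rintro ⟨h1, h2, h3⟩
      have hle : (S ∩ Finset.Ioo j (j+a)).card ≤ S.card :=
        Finset.card_le_card Finset.inter_subset_left
      omega
    rw [hemp, Finset.sum_empty]

lemma count_step (n m₀ h : ℕ) (hmn : m₀ < n) (hh : h + 1 ≤ m₀) (S : Finset ℕ)
    (hSsub : S ⊆ Finset.Icc 1 n) (hSc : S.card = n - m₀ - 1) :
    ∑ a ∈ Finset.Icc (m₀ - h) (n - 1), ∑ j ∈ Finset.Icc 1 (n - a),
      (if (j ∉ S ∧ j + a ∉ S ∧ (S ∩ Finset.Ioo j (j+a)).card + m₀ = h + a) then (1:ℕ) else 0)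
      = h + 1 := by
  classical
  rw [Finset.sum_sigma', ← Finset.card_filter]
  set G := Finset.Icc 1 n \ S with hG
  have hmemG : ∀ x, x ∈ G ↔ (1 ≤ x ∧ x ≤ n ∧ x ∉ S) := by
    intro x
    simp only [hG, Finset.mem_sdiff, Finset.mem_Icc]
    tauto
  have hGc : G.card = m₀ + 1 := by
    rw [hG, Finset.card_sdiff_of_subset hSsub, Nat.card_Icc, hSc]; omega
  have hpairs := count_pairs G (m₀ - h - 1) (by omega)
  have hdisSG : Disjoint S G := by
    rw [Finset.disjoint_right]
    intro x hx
    rw [hmemG] at hx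
    exact hx.2.2
  have hpart : ∀ g g', 1 ≤ g → g' ≤ n →
      (S ∩ Finset.Ioo g g').card + (G ∩ Finset.Ioo g g').card = g' - g - 1 := by
    intro g g' h1 h2
    have hdis : Disjoint (S ∩ Finset.Ioo g g') (G ∩ Finset.Ioo g g') :=
      hdisSG.mono Finset.inter_subset_left Finset.inter_subset_left
    have hun : Finset.Ioo g g' = (S ∩ Finset.Ioo g g') ∪ (G ∩ Finset.Ioo g g') := by
      ext x
      simp only [Finset.mem_union, Finset.mem_inter, Finset.mem_Ioo, hmemG]
      constructor
      · intro hx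
        by_cases hxS : x ∈ S
        · exact Or.inl ⟨hxS, hx⟩
        · exact Or.inr ⟨⟨by omega, by omega, hxS⟩, hx⟩
      · rintro (⟨_, hx⟩ | ⟨_, hx⟩) <;> exact hx
    calc (S ∩ Finset.Ioo g g').card + (G ∩ Finset.Ioo g g').card
        = ((S ∩ Finset.Ioo g g') ∪ (G ∩ Finset.Ioo g g')).card :=
          (Finset.card_union_of_disjoint hdis).symm
      _ = (Finset.Ioo g g').card := by rw [← hun]
      _ = g' - g - 1 := Nat.card_Ioo g g'
  have hbij : ((((Finset.Icc (m₀ - h) (n - 1)).sigma (fun a => Finset.Icc 1 (n - a))).filter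
      (fun p => p.2 ∉ S ∧ p.2 + p.1 ∉ S ∧ (S ∩ Finset.Ioo p.2 (p.2 + p.1)).card + m₀ = h + p.1)).card)
      = (((G ×ˢ G).filter (fun p => p.1 < p.2 ∧ (G ∩ Finset.Ioo p.1 p.2).card = m₀ - h - 1)).card) := by
    refine Finset.card_bij (fun p _ => (p.2, p.2 + p.1)) ?_ ?_ ?_
    · rintro ⟨a, j⟩ hp
      simp only [Finset.mem_filter, Finset.mem_sigma, Finset.mem_Icc] at hp
      obtain ⟨⟨⟨ha1, ha2⟩, hj1, hj2⟩, hjS, hjaS, hcard⟩ := hp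
      have hj : j ∈ G := (hmemG j).2 ⟨by omega, by omega, hjS⟩
      have hja : j + a ∈ G := (hmemG (j+a)).2 ⟨by omega, by omega, hjaS⟩
      have hp := hpart j (j + a) (by omega) (by omega)
      simp only [Finset.mem_filter, Finset.mem_product]
      refine ⟨⟨hj, hja⟩, by omega, by omega⟩
    · rintro ⟨a, j⟩ hp ⟨a', j'⟩ hq heq
      simp only [Prod.mk.injEq] at heq
      obtain ⟨h1, h2⟩ := heq
      have ha : a = a' := by omega
      subst ha; subst h1; rfl
    · rintro ⟨g, g'⟩ hgg
      simp only [Finset.mem_filter, Finset.mem_product] at hgg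
      obtain ⟨⟨hgG, hg'G⟩, hlt, hcard⟩ := hgg
      rw [hmemG] at hgG hg'G
      have hpp := hpart g g' (by omega) (by omega)
      have hgg' : g + (g' - g) = g' := by omega
      refine ⟨⟨g' - g, g⟩, ?_, ?_⟩
      · simp only [Finset.mem_filter, Finset.mem_sigma, Finset.mem_Icc]
        refine ⟨⟨⟨by omega, by omega⟩, by omega, by omega⟩, hgG.2.2, ?_, ?_⟩
        · rw [hgg']; exact hg'G.2.2
        · rw [hgg']; omega
      · simp only [Prod.mk.injEq]
        exact ⟨trivial, hgg'⟩
  rw [hbij, hpairs, hGc]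
  omega

end Lemma52Aux

open Finset MvPolynomial Lemma52Aux

/-- The identity of elementary symmetric polynomials (Lemma 5.2 of the paper):
`(h+1)·e_{n−m₀−1}(x₁,…,xₙ)
  = Σ_{a=m₀−h}^{n−1} Σ_{j=1}^{n−a} e_{h−m₀+a}(x_{j+1},…,x_{j+a−1})
      · e_{n−h−1−a}(x_{j+a+1},…,xₙ,x₁,…,x_{j−1})` in `ℤ[x₁,…,xₙ]`. -/
theorem stmt_0 (n m₀ : ℕ) (hm₀ : 0 < m₀) (hmn : m₀ < n) (h : ℕ) (hh : h ≤ m₀ - 1) :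
    ((h : ℤ) + 1) • esymList (xs 1 n) ((n : ℤ) - (m₀ : ℤ) - 1) =
      ∑ a ∈ Finset.Icc (m₀ - h) (n - 1), ∑ j ∈ Finset.Icc 1 (n - a),
        esymList (xs (j + 1) (a - 1)) ((h : ℤ) - (m₀ : ℤ) + (a : ℤ)) *
          esymList (xs (j + a + 1) (n - (j + a)) ++ xs 1 (j - 1))
            ((n : ℤ) - (h : ℤ) - 1 - (a : ℤ)) := by
  classical
  have hh' : h + 1 ≤ m₀ := by omega
  have hRHS : ∑ a ∈ Finset.Icc (m₀ - h) (n - 1), ∑ j ∈ Finset.Icc 1 (n - a),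
        esymList (xs (j + 1) (a - 1)) ((h : ℤ) - (m₀ : ℤ) + (a : ℤ)) *
          esymList (xs (j + a + 1) (n - (j + a)) ++ xs 1 (j - 1))
            ((n : ℤ) - (h : ℤ) - 1 - (a : ℤ))
      = ∑ a ∈ Finset.Icc (m₀ - h) (n - 1), ∑ j ∈ Finset.Icc 1 (n - a),
          ∑ S ∈ Finset.powersetCard (n - m₀ - 1) (Finset.Icc 1 n),
            if (j ∉ S ∧ j + a ∉ S ∧ (S ∩ Finset.Ioo j (j+a)).card + m₀ = h + a)
            then ∏ i ∈ S, (X i : MvPolynomial ℕ ℤ) else 0 := by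
    refine Finset.sum_congr rfl fun a ha => Finset.sum_congr rfl fun j hj => ?_
    rw [Finset.mem_Icc] at ha hj
    rw [term_eq n m₀ h a j hmn hh' ha.1 ha.2 hj.1 (by omega), Finset.sum_filter]
  rw [hRHS]
  rw [show (∑ a ∈ Finset.Icc (m₀ - h) (n - 1), ∑ j ∈ Finset.Icc 1 (n - a),
          ∑ S ∈ Finset.powersetCard (n - m₀ - 1) (Finset.Icc 1 n),
            if (j ∉ S ∧ j + a ∉ S ∧ (S ∩ Finset.Ioo j (j+a)).card + m₀ = h + a)
            then ∏ i ∈ S, (X i : MvPolynomial ℕ ℤ) else 0)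
      = ∑ S ∈ Finset.powersetCard (n - m₀ - 1) (Finset.Icc 1 n),
          ∑ a ∈ Finset.Icc (m₀ - h) (n - 1), ∑ j ∈ Finset.Icc 1 (n - a),
            if (j ∉ S ∧ j + a ∉ S ∧ (S ∩ Finset.Ioo j (j+a)).card + m₀ = h + a)
            then ∏ i ∈ S, (X i : MvPolynomial ℕ ℤ) else 0 from by
    rw [← Finset.sum_comm]
    exact Finset.sum_congr rfl fun a _ => Finset.sum_comm]
  have hLHS : esymList (xs 1 n) ((n : ℤ) - (m₀ : ℤ) - 1)
      = ∑ S ∈ Finset.powersetCard (n - m₀ - 1) (Finset.Icc 1 n),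
          ∏ i ∈ S, (X i : MvPolynomial ℕ ℤ) := by
    have hc : ((n : ℤ) - (m₀ : ℤ) - 1) = ((n - m₀ - 1 : ℕ) : ℤ) := by omega
    rw [hc, xs, esymList_map _ (List.nodup_range'), toFinset_range']
    congr 1
    rw [show 1 + n = n + 1 by omega, Finset.Ico_add_one_right_eq_Icc]
  rw [hLHS, show ((h : ℤ) + 1) = (((h + 1 : ℕ) : ℤ)) by push_cast; ring, natCast_zsmul,
    Finset.smul_sum]
  refine Finset.sum_congr rfl fun S hS => ?_
  rw [Finset.mem_powersetCard] at hS
  have hcount := count_step n m₀ h hmn hh' S hS.1 hS.2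
  calc (h + 1) • ∏ i ∈ S, (X i : MvPolynomial ℕ ℤ)
      = (∑ a ∈ Finset.Icc (m₀ - h) (n - 1), ∑ j ∈ Finset.Icc 1 (n - a),
          if (j ∉ S ∧ j + a ∉ S ∧ (S ∩ Finset.Ioo j (j+a)).card + m₀ = h + a)
          then (1:ℕ) else 0) • ∏ i ∈ S, (X i : MvPolynomial ℕ ℤ) := by rw [hcount]
    _ = ∑ a ∈ Finset.Icc (m₀ - h) (n - 1), ∑ j ∈ Finset.Icc 1 (n - a),
          if (j ∉ S ∧ j + a ∉ S ∧ (S ∩ Finset.Ioo j (j+a)).card + m₀ = h + a)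
          then ∏ i ∈ S, (X i : MvPolynomial ℕ ℤ) else 0 := by
        rw [Finset.sum_smul]
        refine Finset.sum_congr rfl fun a _ => ?_
        rw [Finset.sum_smul]
        refine Finset.sum_congr rfl fun j _ => ?_
        split <;> simp
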